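/- Let n ≥ k ≥ 1 be integers. For any probability mass function p on [n] = {1,…,n}, let T_k^p be the least r ≥ 1 such that at least k distinct values appear among the first r terms of an i.i.d. sequence distributed according to p. Then E[T_k^p] ≥ Σ_{i=0}^{k-1} n/(n−i), and equality holds when p is the uniform distribution on [n], i.e., E[T_k^u] = Σ_{i=0}^{k-1} n/(n−i) = n(H_n − H_{n−k}). -/

import Mathlib

open MeasureTheory Finset
open scoped ENNReal

/-- The first time `r ≥ 1` (as an element of `[0,∞]`, with value `∞` if there is no such time)
at which the condition `cond r ω` holds. -/
noncomputable def firstTime {Ω : Type*} (cond : ℕ → Ω → Prop) (ω : Ω) : ℝ≥0∞ :=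
  sInf {x : ℝ≥0∞ | ∃ r : ℕ, x = (r : ℝ≥0∞) ∧ 1 ≤ r ∧ cond r ω}

/-- The `m`-th harmonic number `H_m = Σ_{j=1}^m 1/j`. -/
noncomputable def harmonicNumber (m : ℕ) : ℝ := ∑ j ∈ Finset.range m, 1 / ((j : ℝ) + 1)

namespace CCAux

variable {n : ℕ}

/-- weight of a tuple -/
noncomputable def wt (p : Fin n → ℝ≥0∞) {m : ℕ} (a : Fin m → Fin n) : ℝ≥0∞ := ∏ i, p (a i)

/-- image of a tuple -/
def img {m : ℕ} (a : Fin m → Fin n) : Finset (Fin n) := Finset.image a Finset.univ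

/-- probability that the set of values seen in the first `m` draws is exactly `S` -/
noncomputable def Pm (p : Fin n → ℝ≥0∞) (m : ℕ) (S : Finset (Fin n)) : ℝ≥0∞ :=
  ∑ a : Fin m → Fin n, if img a = S then wt p a else 0

/-- mass of `S` -/
noncomputable def pS (p : Fin n → ℝ≥0∞) (S : Finset (Fin n)) : ℝ≥0∞ := ∑ x ∈ S, p x

/-- mass of complement of `S` -/
noncomputable def qS (p : Fin n → ℝ≥0∞) (S : Finset (Fin n)) : ℝ≥0∞ := ∑ x ∈ Sᶜ, p x

lemma pS_add_qS (p : Fin n → ℝ≥0∞) (hp : ∑ i, p i = 1) (S : Finset (Fin n)) :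
    pS p S + qS p S = 1 := by
  rw [pS, qS, Finset.sum_add_sum_compl, hp]

lemma pS_le_one (p : Fin n → ℝ≥0∞) (hp : ∑ i, p i = 1) (S : Finset (Fin n)) :
    pS p S ≤ 1 := by
  calc pS p S ≤ pS p S + qS p S := le_self_add
  _ = 1 := pS_add_qS p hp S

lemma p_le_one (p : Fin n → ℝ≥0∞) (hp : ∑ i, p i = 1) (x : Fin n) : p x ≤ 1 := by
  rw [← hp]; exact Finset.single_le_sum (fun i _ => zero_le) (mem_univ x)

lemma wt_cons (p : Fin n → ℝ≥0∞) {m : ℕ} (x : Fin n) (b : Fin m → Fin n) :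
    wt p (Fin.cons x b) = p x * wt p b := by
  rw [wt, Fin.prod_univ_succ]
  simp [wt]

lemma img_cons {m : ℕ} (x : Fin n) (b : Fin m → Fin n) :
    img (Fin.cons x b) = insert x (img b) := by
  ext c
  simp only [img, Finset.mem_image, Finset.mem_insert, Finset.mem_univ, true_and]
  constructor
  · rintro ⟨i, rfl⟩
    rcases Fin.eq_zero_or_eq_succ i with rfl | ⟨j, rfl⟩
    · exact Or.inl rfl
    · exact Or.inr ⟨j, rfl⟩
  · rintro (rfl | ⟨j, rfl⟩)
    · exact ⟨0, rfl⟩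
    · exact ⟨j.succ, by simp⟩

lemma sum_succ_decomp {m : ℕ} (f : (Fin (m+1) → Fin n) → ℝ≥0∞) :
    ∑ a : Fin (m+1) → Fin n, f a = ∑ x : Fin n, ∑ b : Fin m → Fin n, f (Fin.cons x b) := by
  have h1 : ∑ a : Fin (m+1) → Fin n, f a
      = ∑ z : Fin n × (Fin m → Fin n), f (Fin.cons z.1 z.2) :=
    (Fintype.sum_equiv (Fin.consEquiv (fun _ => Fin n))
      (fun z => f (Fin.cons z.1 z.2)) f (fun z => rfl)).symm
  rw [h1, Fintype.sum_prod_type]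

lemma insert_eq_iff' {x : Fin n} {S I : Finset (Fin n)} (hx : x ∈ S) :
    insert x I = S ↔ I = S ∨ I = S.erase x := by
  constructor
  · intro h
    by_cases hxI : x ∈ I
    · left; rw [← h, Finset.insert_eq_self.2 hxI]
    · right; rw [← h, Finset.erase_insert hxI]
  · rintro (rfl | rfl)
    · exact Finset.insert_eq_self.2 hx
    · exact Finset.insert_erase hx

lemma Pm_zero (p : Fin n → ℝ≥0∞) (S : Finset (Fin n)) :
    Pm p 0 S = if S = ∅ then 1 else 0 := by
  rw [Pm]
  rw [Fintype.sum_eq_single (fun i : Fin 0 => i.elim0)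
    (fun a ha => absurd (funext (fun i => i.elim0)) ha)]
  have h1 : img (fun i : Fin 0 => i.elim0 (α := Fin n)) = (∅ : Finset (Fin n)) := by
    simp [img]
  rw [h1]
  have h2 : wt p (fun i : Fin 0 => i.elim0 (α := Fin n)) = 1 := by simp [wt]
  rw [h2]
  by_cases h : S = ∅ <;> simp [h, eq_comm]

lemma Pm_succ (p : Fin n → ℝ≥0∞) (m : ℕ) (S : Finset (Fin n)) :
    Pm p (m+1) S = Pm p m S * pS p S + ∑ x ∈ S, p x * Pm p m (S.erase x) := by
  rw [Pm, sum_succ_decomp]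
  have key : ∀ x : Fin n,
      (∑ b : Fin m → Fin n, if img (Fin.cons x b) = S then wt p (Fin.cons x b) else 0)
      = if x ∈ S then p x * Pm p m S + p x * Pm p m (S.erase x) else 0 := by
    intro x
    by_cases hx : x ∈ S
    · rw [if_pos hx]
      have hne : S ≠ S.erase x := fun h => (Finset.erase_eq_self.1 h.symm) hx
      have step : ∀ b : Fin m → Fin n,
          (if img (Fin.cons x b) = S then wt p (Fin.cons x b) else 0)
          = (if img b = S then p x * wt p b else 0)
            + (if img b = S.erase x then p x * wt p b else 0) := by
        intro b
        rw [img_cons, wt_cons]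
        by_cases h1 : img b = S
        · rw [if_pos ((insert_eq_iff' hx).2 (Or.inl h1)), if_pos h1,
            if_neg (fun h2 => hne (h1.symm.trans h2)), add_zero]
        · by_cases h2 : img b = S.erase x
          · rw [if_pos ((insert_eq_iff' hx).2 (Or.inr h2)), if_neg h1, if_pos h2, zero_add]
          · rw [if_neg (fun h => by rcases (insert_eq_iff' hx).1 h with h' | h' <;> tauto),
              if_neg h1, if_neg h2, add_zero]
      rw [Finset.sum_congr rfl (fun b _ => step b), Finset.sum_add_distrib]
      rw [Pm, Pm, Finset.mul_sum, Finset.mul_sum]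
      congr 1
      · exact Finset.sum_congr rfl (fun b _ => by split <;> simp)
      · exact Finset.sum_congr rfl (fun b _ => by split <;> simp)
    · rw [if_neg hx]
      apply Finset.sum_eq_zero
      intro b _
      rw [if_neg]
      rw [img_cons]
      intro h
      exact hx (h ▸ Finset.mem_insert_self x (img b))
  rw [Finset.sum_congr rfl (fun x _ => key x)]
  rw [Finset.sum_ite_mem, Finset.univ_inter, Finset.sum_add_distrib]
  congr 1
  · rw [pS, Finset.mul_sum]; exact Finset.sum_congr rfl (fun x _ => mul_comm _ _)


/-- occupation "measure": expected number of epochs at which the collected set equals `S` -/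
noncomputable def nu (p : Fin n → ℝ≥0∞) (S : Finset (Fin n)) : ℝ≥0∞ := ∑' m, Pm p m S

lemma nu_eq (p : Fin n → ℝ≥0∞) (S : Finset (Fin n)) :
    nu p S = (if S = ∅ then 1 else 0)
      + (nu p S * pS p S + ∑ x ∈ S, p x * nu p (S.erase x)) := by
  have h1 : ∑' m, Pm p (m+1) S
      = nu p S * pS p S + ∑ x ∈ S, p x * nu p (S.erase x) := by
    calc ∑' m, Pm p (m+1) S
        = ∑' m, (Pm p m S * pS p S + ∑ x ∈ S, p x * Pm p m (S.erase x)) :=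
          tsum_congr (fun m => Pm_succ p m S)
      _ = (∑' m, Pm p m S * pS p S) + ∑' m, ∑ x ∈ S, p x * Pm p m (S.erase x) :=
          ENNReal.tsum_add
      _ = nu p S * pS p S + ∑ x ∈ S, p x * nu p (S.erase x) := by
          congr 1
          · exact ENNReal.tsum_mul_right
          · rw [Summable.tsum_finsetSum (fun x _ => ENNReal.summable)]
            exact Finset.sum_congr rfl (fun x _ => ENNReal.tsum_mul_left)
  conv_lhs => rw [nu, tsum_eq_zero_add' ENNReal.summable, Pm_zero, h1]

lemma nu_empty (p : Fin n → ℝ≥0∞) : nu p ∅ = 1 := by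
  have h := nu_eq p ∅
  have hps : pS p (∅ : Finset (Fin n)) = 0 := Finset.sum_empty
  rw [if_pos rfl, hps, mul_zero, Finset.sum_empty, add_zero, add_zero] at h
  exact h

lemma sum_wt_forall_mem (p : Fin n → ℝ≥0∞) (S : Finset (Fin n)) :
    ∀ m : ℕ, (∑ a : Fin m → Fin n, if (∀ i, a i ∈ S) then wt p a else 0) = pS p S ^ m := by
  intro m
  induction m with
  | zero =>
    rw [Fintype.sum_eq_single (fun i : Fin 0 => i.elim0)
      (fun a ha => absurd (funext (fun i => i.elim0)) ha)]
    simp [wt]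
  | succ m ih =>
    rw [sum_succ_decomp]
    have key : ∀ x : Fin n,
        (∑ b : Fin m → Fin n,
          if (∀ i, (Fin.cons x b : Fin (m+1) → Fin n) i ∈ S) then wt p (Fin.cons x b) else 0)
        = if x ∈ S then p x * pS p S ^ m else 0 := by
      intro x
      by_cases hx : x ∈ S
      · rw [if_pos hx, ← ih, Finset.mul_sum]
        apply Finset.sum_congr rfl
        intro b _
        have hc : (∀ i, (Fin.cons x b : Fin (m+1) → Fin n) i ∈ S) ↔ (∀ j, b j ∈ S) := by
          constructor
          · intro h j; have := h j.succ; simpa using this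
          · intro h i
            rcases Fin.eq_zero_or_eq_succ i with rfl | ⟨j, rfl⟩
            · simpa using hx
            · simpa using h j
        rw [wt_cons]
        by_cases h : ∀ j, b j ∈ S
        · rw [if_pos (hc.2 h), if_pos h]
        · rw [if_neg (fun hh => h (hc.1 hh)), if_neg h, mul_zero]
      · rw [if_neg hx]
        apply Finset.sum_eq_zero
        intro b _
        rw [if_neg (fun h => hx (by simpa using h 0))]
    rw [Finset.sum_congr rfl (fun x _ => key x), Finset.sum_ite_mem, Finset.univ_inter,
      ← Finset.sum_mul, pow_succ]
    rw [mul_comm (pS p S ^ m)]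
    rfl

lemma Pm_le_pow (p : Fin n → ℝ≥0∞) (m : ℕ) (S : Finset (Fin n)) :
    Pm p m S ≤ pS p S ^ m := by
  rw [← sum_wt_forall_mem p S m, Pm]
  apply Finset.sum_le_sum
  intro a _
  by_cases h : img a = S
  · rw [if_pos h, if_pos (fun i => h ▸ (Finset.mem_image.2 ⟨i, mem_univ i, rfl⟩))]
  · rw [if_neg h]; exact zero_le

lemma nu_le_inv (p : Fin n → ℝ≥0∞) (S : Finset (Fin n)) :
    nu p S ≤ (1 - pS p S)⁻¹ := by
  rw [← ENNReal.tsum_geometric]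
  exact ENNReal.tsum_le_tsum (fun m => Pm_le_pow p m S)

lemma nu_ne_top (p : Fin n → ℝ≥0∞) {S : Finset (Fin n)} (h : pS p S < 1) :
    nu p S ≠ ⊤ := by
  refine ne_top_of_le_ne_top ?_ (nu_le_inv p S)
  rw [Ne, ENNReal.inv_eq_top, tsub_eq_zero_iff_le]
  exact not_le.2 h

lemma pS_ne_top (p : Fin n → ℝ≥0∞) (hp : ∑ i, p i = 1) (S : Finset (Fin n)) :
    pS p S ≠ ⊤ :=
  ne_top_of_le_ne_top ENNReal.one_ne_top (pS_le_one p hp S)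

lemma nu_mul_q (p : Fin n → ℝ≥0∞) (hp : ∑ i, p i = 1) {S : Finset (Fin n)}
    (hfin : nu p S ≠ ⊤) (hS : S ≠ ∅) :
    nu p S * qS p S = ∑ x ∈ S, p x * nu p (S.erase x) := by
  have h := nu_eq p S
  rw [if_neg hS, zero_add] at h
  have h2 : nu p S * pS p S + nu p S * qS p S
      = nu p S * pS p S + ∑ x ∈ S, p x * nu p (S.erase x) := by
    rw [← mul_add, pS_add_qS p hp, mul_one, ← h]
  exact WithTop.add_left_cancel (ENNReal.mul_ne_top hfin (pS_ne_top p hp S)) h2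


/-! ### Measure-theoretic part -/

lemma cyl_measurable (m : ℕ) (a : Fin m → Fin n) :
    MeasurableSet {ω : ℕ → Fin n | ∀ i : Fin m, ω (i : ℕ) = a i} := by
  have h : {ω : ℕ → Fin n | ∀ i : Fin m, ω (i : ℕ) = a i}
      = ⋂ i : Fin m, (fun ω : ℕ → Fin n => ω (i : ℕ)) ⁻¹' {a i} := by
    ext ω; simp [Set.mem_iInter]
  rw [h]
  exact MeasurableSet.iInter (fun i => (measurable_pi_apply _) (measurableSet_singleton _))

lemma event_eq_biUnion (m : ℕ) (Q : (Fin m → Fin n) → Prop) [DecidablePred Q] :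
    {ω : ℕ → Fin n | Q (fun i : Fin m => ω (i : ℕ))}
      = ⋃ a ∈ Finset.univ.filter Q, {ω : ℕ → Fin n | ∀ i : Fin m, ω (i : ℕ) = a i} := by
  ext ω
  simp only [Set.mem_setOf_eq, Set.mem_iUnion, Finset.mem_filter, Finset.mem_univ, true_and]
  constructor
  · intro h
    exact ⟨fun i : Fin m => ω (i : ℕ), h, fun i => rfl⟩
  · rintro ⟨a, hQ, ha⟩
    have : (fun i : Fin m => ω (i : ℕ)) = a := funext ha
    rw [this]; exact hQ

lemma event_measurable (m : ℕ) (Q : (Fin m → Fin n) → Prop) [DecidablePred Q] :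
    MeasurableSet {ω : ℕ → Fin n | Q (fun i : Fin m => ω (i : ℕ))} := by
  rw [event_eq_biUnion m Q]
  exact Finset.measurableSet_biUnion _ (fun a _ => cyl_measurable m a)

lemma meas_event (p : Fin n → ℝ≥0∞) (μ : Measure (ℕ → Fin n))
    (hμ : ∀ (m : ℕ) (a : Fin m → Fin n),
      μ {ω : ℕ → Fin n | ∀ i : Fin m, ω (i : ℕ) = a i} = ∏ i : Fin m, p (a i))
    (m : ℕ) (Q : (Fin m → Fin n) → Prop) [DecidablePred Q] :
    μ {ω : ℕ → Fin n | Q (fun i : Fin m => ω (i : ℕ))}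
      = ∑ a ∈ Finset.univ.filter Q, wt p a := by
  rw [event_eq_biUnion m Q, measure_biUnion_finset ?_ (fun a _ => cyl_measurable m a)]
  · exact Finset.sum_congr rfl (fun a _ => hμ m a)
  · intro a _ b _ hab
    refine Set.disjoint_left.2 (fun ω ha hb => hab ?_)
    exact funext (fun i => (ha i).symm.trans (hb i))

/-- the coverage condition -/
def condD (k r : ℕ) (ω : ℕ → Fin n) : Prop :=
  k ≤ ((Finset.univ : Finset (Fin r)).image (fun j : Fin r => ω (j : ℕ))).card

instance (k r : ℕ) : DecidablePred (condD (n := n) k r) := by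
  intro ω; unfold condD; infer_instance

instance (k : ℕ) (ω : ℕ → Fin n) : DecidablePred (fun r => condD (n := n) k r ω) := by
  intro r; unfold condD; infer_instance

lemma condD_mono (k : ℕ) {r s : ℕ} (hrs : r ≤ s) (ω : ℕ → Fin n) :
    condD k r ω → condD k s ω := by
  intro h
  refine le_trans h (Finset.card_le_card ?_)
  intro c hc
  rcases Finset.mem_image.1 hc with ⟨j, _, hj⟩
  exact Finset.mem_image.2 ⟨⟨(j : ℕ), lt_of_lt_of_le j.2 hrs⟩, Finset.mem_univ _, hj⟩

lemma not_condD_zero {k : ℕ} (hk : 1 ≤ k) (ω : ℕ → Fin n) : ¬ condD k 0 ω := by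
  unfold condD
  simp only [Finset.univ_eq_empty, Finset.image_empty, Finset.card_empty]
  omega

/-- the event that fewer than `k` values were seen up to time `m` -/
def Am (k m : ℕ) : Set (ℕ → Fin n) := {ω | ¬ condD k m ω}

lemma Am_measurable (k m : ℕ) : MeasurableSet (Am (n := n) k m) :=
  event_measurable m (fun a => ¬ k ≤ (Finset.image a Finset.univ).card)

lemma firstTime_gt_iff {k : ℕ} (hk : 1 ≤ k) (ω : ℕ → Fin n) (m : ℕ) :
    (m : ℝ≥0∞) < firstTime (fun r ω => condD k r ω) ω ↔ ¬ condD k m ω := by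
  constructor
  · intro h hc
    have hm1 : 1 ≤ m := by
      rcases Nat.eq_zero_or_pos m with rfl | h1
      · exact absurd hc (not_condD_zero hk ω)
      · exact h1
    have : firstTime (fun r ω => condD k r ω) ω ≤ (m : ℝ≥0∞) :=
      sInf_le ⟨m, rfl, hm1, hc⟩
    exact absurd h (not_lt.2 this)
  · intro h
    have hlb : ((m : ℝ≥0∞) + 1) ≤ firstTime (fun r ω => condD k r ω) ω := by
      apply le_sInf
      rintro x ⟨r, rfl, _, hr⟩
      have hrm : m < r := by
        by_contra hmr
        exact h (condD_mono k (not_lt.1 hmr) ω hr)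
      calc ((m : ℝ≥0∞) + 1) = ((m + 1 : ℕ) : ℝ≥0∞) := by push_cast; ring
      _ ≤ (r : ℝ≥0∞) := by exact_mod_cast hrm
    calc (m : ℝ≥0∞) < (m : ℝ≥0∞) + 1 :=
      ENNReal.lt_add_right (ENNReal.natCast_ne_top m) one_ne_zero
    _ ≤ _ := hlb

lemma tsum_ite_lt (c : ℝ≥0∞) (hc : c = ⊤ ∨ ∃ r : ℕ, c = r) :
    ∑' m : ℕ, (if (m : ℝ≥0∞) < c then (1 : ℝ≥0∞) else 0) = c := by
  rcases hc with rfl | ⟨r, rfl⟩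
  · have h : ∀ m : ℕ, (if (m : ℝ≥0∞) < ⊤ then (1 : ℝ≥0∞) else 0) = 1 := fun m =>
      if_pos (ENNReal.natCast_lt_top m)
    rw [tsum_congr h]
    exact ENNReal.tsum_const_eq_top_of_ne_zero one_ne_zero
  · have h : ∀ m : ℕ, (if (m : ℝ≥0∞) < (r : ℝ≥0∞) then (1 : ℝ≥0∞) else 0)
        = if m ∈ Finset.range r then (1:ℝ≥0∞) else 0 := by
      intro m
      by_cases hm : m < r
      · rw [if_pos (by exact_mod_cast hm), if_pos (Finset.mem_range.2 hm)]
      · rw [if_neg (by exact_mod_cast hm), if_neg (fun hh => hm (Finset.mem_range.1 hh))]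
    rw [tsum_congr h, tsum_eq_sum (fun m hm => if_neg hm),
      Finset.sum_congr rfl (fun m hm => if_pos hm), Finset.sum_const, Finset.card_range]
    simp

lemma firstTime_eq_tsum {k : ℕ} (hk : 1 ≤ k) (ω : ℕ → Fin n) :
    firstTime (fun r ω => condD k r ω) ω
      = ∑' m : ℕ, (Am (n := n) k m).indicator (fun _ => (1 : ℝ≥0∞)) ω := by
  have hind : ∀ m : ℕ, (Am (n := n) k m).indicator (fun _ => (1 : ℝ≥0∞)) ω
      = if (m : ℝ≥0∞) < firstTime (fun r ω => condD k r ω) ω then (1:ℝ≥0∞) else 0 := by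
    intro m
    by_cases h : ω ∈ Am (n := n) k m
    · rw [Set.indicator_of_mem h, if_pos ((firstTime_gt_iff hk ω m).2 h)]
    · rw [Set.indicator_of_notMem h,
        if_neg (fun hh => h ((firstTime_gt_iff hk ω m).1 hh))]
  rw [tsum_congr hind, tsum_ite_lt]
  by_cases hex : ∃ r : ℕ, condD k r ω
  · right
    refine ⟨Nat.find hex, le_antisymm (sInf_le ⟨Nat.find hex, rfl, ?_, Nat.find_spec hex⟩) ?_⟩
    · have : Nat.find hex ≠ 0 := fun h0 => not_condD_zero hk ω (h0 ▸ Nat.find_spec hex)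
      omega
    · apply le_sInf
      rintro x ⟨r, rfl, _, hr⟩
      exact_mod_cast Nat.find_min' hex hr
  · left
    rw [firstTime]
    refine (congrArg sInf (?_ : _ = (∅ : Set ℝ≥0∞))).trans sInf_empty
    rw [Set.eq_empty_iff_forall_notMem]
    rintro x ⟨r, rfl, _, hr⟩
    exact hex ⟨r, hr⟩

lemma lintegral_firstTime (k : ℕ) (hk : 1 ≤ k) (μ : Measure (ℕ → Fin n)) :
    ∫⁻ ω, firstTime (fun r ω => condD k r ω) ω ∂μ = ∑' m : ℕ, μ (Am (n := n) k m) := by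
  rw [lintegral_congr (firstTime_eq_tsum hk),
    lintegral_tsum (fun m => ((measurable_const).indicator (Am_measurable k m)).aemeasurable)]
  refine tsum_congr (fun m => ?_)
  rw [lintegral_indicator_const (Am_measurable k m), one_mul]

lemma meas_Am (p : Fin n → ℝ≥0∞) (μ : Measure (ℕ → Fin n))
    (hμ : ∀ (m : ℕ) (a : Fin m → Fin n),
      μ {ω : ℕ → Fin n | ∀ i : Fin m, ω (i : ℕ) = a i} = ∏ i : Fin m, p (a i))
    (k m : ℕ) :
    μ (Am (n := n) k m)
      = ∑ a ∈ Finset.univ.filter (fun a : Fin m → Fin n => ¬ k ≤ (img a).card), wt p a :=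
  meas_event p μ hμ m (fun a : Fin m → Fin n => ¬ k ≤ (img a).card)


lemma Pm_eq_filter (p : Fin n → ℝ≥0∞) (m : ℕ) (S : Finset (Fin n)) :
    Pm p m S = ∑ a ∈ Finset.univ.filter (fun a : Fin m → Fin n => img a = S), wt p a := by
  rw [Pm, Finset.sum_filter]

lemma level_sum (p : Fin n → ℝ≥0∞) (m j : ℕ) :
    ∑ S ∈ Finset.powersetCard j (Finset.univ : Finset (Fin n)), Pm p m S
      = ∑ a ∈ Finset.univ.filter (fun a : Fin m → Fin n => (img a).card = j), wt p a := by
  rw [← Finset.sum_fiberwise_of_maps_to (g := img)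
    (t := Finset.powersetCard j (Finset.univ : Finset (Fin n)))
    (fun a ha => Finset.mem_powersetCard.2
      ⟨Finset.subset_univ _, (Finset.mem_filter.1 ha).2⟩) (wt p)]
  refine Finset.sum_congr rfl (fun S hS => ?_)
  rw [Pm_eq_filter, Finset.filter_filter]
  refine Finset.sum_congr (Finset.filter_congr (fun a _ => ?_)) (fun _ _ => rfl)
  have hcard := (Finset.mem_powersetCard.1 hS).2
  constructor
  · intro h
    exact ⟨by rw [h]; exact hcard, h⟩
  · intro h; exact h.2

lemma bad_sum_regroup (p : Fin n → ℝ≥0∞) (k m : ℕ) :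
    ∑ a ∈ Finset.univ.filter (fun a : Fin m → Fin n => ¬ k ≤ (img a).card), wt p a
      = ∑ j ∈ Finset.range k, ∑ S ∈ Finset.powersetCard j (Finset.univ : Finset (Fin n)),
          Pm p m S := by
  rw [← Finset.sum_fiberwise_of_maps_to (g := fun a : Fin m → Fin n => (img a).card)
    (t := Finset.range k)
    (fun a ha => Finset.mem_range.2 (not_le.1 (Finset.mem_filter.1 ha).2)) (wt p)]
  refine Finset.sum_congr rfl (fun j hj => ?_)
  rw [level_sum, Finset.filter_filter]
  refine Finset.sum_congr (Finset.filter_congr (fun a _ => ?_)) (fun _ _ => rfl)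
  have hjk := Finset.mem_range.1 hj
  constructor
  · intro h; exact h.2
  · intro h
    have h' : (img a).card = j := h
    refine ⟨show ¬ k ≤ (img a).card by omega, h⟩

lemma lintegral_eq_sum_nu (p : Fin n → ℝ≥0∞) (μ : Measure (ℕ → Fin n))
    (hμ : ∀ (m : ℕ) (a : Fin m → Fin n),
      μ {ω : ℕ → Fin n | ∀ i : Fin m, ω (i : ℕ) = a i} = ∏ i : Fin m, p (a i))
    (k : ℕ) (hk : 1 ≤ k) :
    ∫⁻ ω, firstTime (fun r ω => condD k r ω) ω ∂μ
      = ∑ j ∈ Finset.range k, ∑ S ∈ Finset.powersetCard j (Finset.univ : Finset (Fin n)),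
          nu p S := by
  rw [lintegral_firstTime k hk μ]
  have h1 : ∀ m : ℕ, μ (Am (n := n) k m)
      = ∑ j ∈ Finset.range k, ∑ S ∈ Finset.powersetCard j (Finset.univ : Finset (Fin n)),
          Pm p m S := by
    intro m
    rw [meas_Am p μ hμ k m, bad_sum_regroup]
  rw [tsum_congr h1, Summable.tsum_finsetSum (fun j _ => ENNReal.summable)]
  refine Finset.sum_congr rfl (fun j _ => ?_)
  rw [Summable.tsum_finsetSum (fun S _ => ENNReal.summable)]
  exact Finset.sum_congr rfl (fun S _ => rfl)


/-! ### Double counting -/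

lemma double_count {M : Type*} [AddCommMonoid M] (j : ℕ) (f : Finset (Fin n) → Fin n → M) :
    ∑ S ∈ Finset.powersetCard (j+1) (Finset.univ : Finset (Fin n)), ∑ x ∈ S, f (S.erase x) x
      = ∑ S ∈ Finset.powersetCard j (Finset.univ : Finset (Fin n)), ∑ x ∈ Sᶜ, f S x := by
  rw [← Finset.sum_sigma (Finset.powersetCard (j+1) (Finset.univ : Finset (Fin n)))
      (fun S => S) (fun z => f (z.1.erase z.2) z.2),
    ← Finset.sum_sigma (Finset.powersetCard j (Finset.univ : Finset (Fin n)))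
      (fun S => Sᶜ) (fun z => f z.1 z.2)]
  refine Finset.sum_nbij' (fun z => ⟨z.1.erase z.2, z.2⟩) (fun z => ⟨insert z.2 z.1, z.2⟩)
    ?_ ?_ ?_ ?_ ?_
  · rintro ⟨S, x⟩ hz
    rw [Finset.mem_sigma] at hz ⊢
    obtain ⟨hS, hx⟩ := hz
    have hcard := (Finset.mem_powersetCard.1 hS).2
    refine ⟨Finset.mem_powersetCard.2 ⟨Finset.subset_univ _, ?_⟩, ?_⟩
    · rw [Finset.card_erase_of_mem hx, hcard]; omega
    · simp [hx]
  · rintro ⟨S, x⟩ hz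
    rw [Finset.mem_sigma] at hz ⊢
    obtain ⟨hS, hx⟩ := hz
    have hcard := (Finset.mem_powersetCard.1 hS).2
    rw [Finset.mem_compl] at hx
    refine ⟨Finset.mem_powersetCard.2 ⟨Finset.subset_univ _, ?_⟩, Finset.mem_insert_self _ _⟩
    rw [Finset.card_insert_of_notMem hx, hcard]
  · rintro ⟨S, x⟩ hz
    rw [Finset.mem_sigma] at hz
    have hx := hz.2
    simp only [Sigma.mk.inj_iff, heq_eq_eq, and_true]
    exact Finset.insert_erase hx
  · rintro ⟨S, x⟩ hz
    rw [Finset.mem_sigma] at hz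
    have hx := Finset.mem_compl.1 hz.2
    simp only [Sigma.mk.inj_iff, heq_eq_eq, and_true]
    exact Finset.erase_insert hx
  · rintro ⟨S, x⟩ _
    rfl

/-! ### Real-valued quantities -/

noncomputable def nuR (p : Fin n → ℝ≥0∞) (S : Finset (Fin n)) : ℝ := (nu p S).toReal
noncomputable def qR (p : Fin n → ℝ≥0∞) (S : Finset (Fin n)) : ℝ := (qS p S).toReal
noncomputable def pR (p : Fin n → ℝ≥0∞) (x : Fin n) : ℝ := (p x).toReal

lemma nuR_nonneg (p : Fin n → ℝ≥0∞) (S : Finset (Fin n)) : 0 ≤ nuR p S := ENNReal.toReal_nonneg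
lemma qR_nonneg (p : Fin n → ℝ≥0∞) (S : Finset (Fin n)) : 0 ≤ qR p S := ENNReal.toReal_nonneg
lemma pR_nonneg (p : Fin n → ℝ≥0∞) (x : Fin n) : 0 ≤ pR p x := ENNReal.toReal_nonneg

lemma qS_le_one (p : Fin n → ℝ≥0∞) (hp : ∑ i, p i = 1) (S : Finset (Fin n)) :
    qS p S ≤ 1 := by
  calc qS p S ≤ pS p S + qS p S := le_add_self
  _ = 1 := pS_add_qS p hp S

lemma qS_ne_top (p : Fin n → ℝ≥0∞) (hp : ∑ i, p i = 1) (S : Finset (Fin n)) :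
    qS p S ≠ ⊤ := ne_top_of_le_ne_top ENNReal.one_ne_top (qS_le_one p hp S)

lemma p_ne_top (p : Fin n → ℝ≥0∞) (hp : ∑ i, p i = 1) (x : Fin n) :
    p x ≠ ⊤ := ne_top_of_le_ne_top ENNReal.one_ne_top (p_le_one p hp x)

lemma nuR_rec (p : Fin n → ℝ≥0∞) (hp : ∑ i, p i = 1) {S : Finset (Fin n)}
    (hfinS : nu p S ≠ ⊤) (hfinE : ∀ x ∈ S, nu p (S.erase x) ≠ ⊤) (hS : S ≠ ∅) :
    nuR p S * qR p S = ∑ x ∈ S, pR p x * nuR p (S.erase x) := by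
  have h := congrArg ENNReal.toReal (nu_mul_q p hp hfinS hS)
  rw [ENNReal.toReal_mul] at h
  rw [ENNReal.toReal_sum
    (fun x hx => ENNReal.mul_ne_top (p_ne_top p hp x) (hfinE x hx))] at h
  rw [nuR, qR, h]
  exact Finset.sum_congr rfl (fun x hx => by rw [ENNReal.toReal_mul]; rfl)

lemma qR_insert (p : Fin n → ℝ≥0∞) (hp : ∑ i, p i = 1) {S : Finset (Fin n)} {x : Fin n}
    (hx : x ∉ S) : qR p (insert x S) + pR p x = qR p S := by
  have h : qS p (insert x S) + p x = qS p S := by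
    rw [qS, qS, Finset.compl_insert]
    exact Finset.sum_erase_add _ _ (Finset.mem_compl.2 hx)
  have := congrArg ENNReal.toReal h
  rw [ENNReal.toReal_add (qS_ne_top p hp _) (p_ne_top p hp x)] at this
  exact this

lemma sum_pR_compl (p : Fin n → ℝ≥0∞) (hp : ∑ i, p i = 1) (S : Finset (Fin n)) :
    ∑ x ∈ Sᶜ, pR p x = qR p S := by
  rw [qR, qS, ENNReal.toReal_sum (fun x _ => p_ne_top p hp x)]
  rfl

lemma sq_sum_le (s : Finset (Fin n)) (f : Fin n → ℝ) :
    (∑ x ∈ s, f x) ^ 2 ≤ (s.card : ℝ) * ∑ x ∈ s, f x ^ 2 := by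
  have h := Finset.sum_mul_sq_le_sq_mul_sq s f (fun _ => 1)
  simp only [mul_one, one_pow] at h
  calc (∑ x ∈ s, f x) ^ 2 ≤ (∑ x ∈ s, f x ^ 2) * ∑ x ∈ s, (1:ℝ) := h
  _ = (s.card : ℝ) * ∑ x ∈ s, f x ^ 2 := by
      rw [Finset.sum_const, nsmul_eq_mul, mul_one, mul_comm]


lemma nuR_empty (p : Fin n → ℝ≥0∞) : nuR p ∅ = 1 := by
  rw [nuR, nu_empty, ENNReal.toReal_one]

lemma qR_empty (p : Fin n → ℝ≥0∞) (hp : ∑ i, p i = 1) : qR p (∅ : Finset (Fin n)) = 1 := by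
  rw [qR, qS, Finset.compl_empty, hp, ENNReal.toReal_one]

section Levels

lemma Rlevel (p : Fin n → ℝ≥0∞) (hp : ∑ i, p i = 1) (k : ℕ)
    (hfin : ∀ S : Finset (Fin n), S.card < k → nu p S ≠ ⊤) : ∀ j, j < k →
    ∑ S ∈ Finset.powersetCard j (Finset.univ : Finset (Fin n)), nuR p S * qR p S = 1 := by
  intro j
  induction j with
  | zero =>
    intro _
    rw [Finset.powersetCard_zero, Finset.sum_singleton, nuR_empty, qR_empty p hp, mul_one]
  | succ j ih =>
    intro hjk
    have hstep : ∀ S' ∈ Finset.powersetCard (j+1) (Finset.univ : Finset (Fin n)),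
        nuR p S' * qR p S' = ∑ x ∈ S', pR p x * nuR p (S'.erase x) := by
      intro S' hS'
      have hcard := (Finset.mem_powersetCard.1 hS').2
      exact nuR_rec p hp (hfin _ (by omega))
        (fun x hx => hfin _ (by rw [Finset.card_erase_of_mem hx, hcard]; omega))
        (by intro h; rw [h] at hcard; simp at hcard)
    rw [Finset.sum_congr rfl hstep,
      double_count j (fun S x => pR p x * nuR p S)]
    rw [← ih (by omega)]
    refine Finset.sum_congr rfl (fun S _ => ?_)
    rw [← Finset.sum_mul, sum_pR_compl p hp, mul_comm]

lemma Qlevel (p : Fin n → ℝ≥0∞) (hp : ∑ i, p i = 1) (k : ℕ)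
    (hfin : ∀ S : Finset (Fin n), S.card < k → nu p S ≠ ⊤) (hkn : k ≤ n) : ∀ j, j < k →
    (∑ S ∈ Finset.powersetCard j (Finset.univ : Finset (Fin n)), nuR p S * qR p S ^ 2) * n
      ≤ ((n : ℝ) - j) := by
  intro j
  induction j with
  | zero =>
    intro _
    rw [Finset.powersetCard_zero, Finset.sum_singleton, nuR_empty, qR_empty p hp]
    norm_num
  | succ j ih =>
    intro hjk
    have hjn : j + 2 ≤ n := by omega
    -- Step A : rewrite level (j+1) sum
    have hstep : ∀ S' ∈ Finset.powersetCard (j+1) (Finset.univ : Finset (Fin n)),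
        nuR p S' * qR p S' ^ 2
          = ∑ x ∈ S', pR p x * nuR p (S'.erase x) * qR p (insert x (S'.erase x)) := by
      intro S' hS'
      have hcard := (Finset.mem_powersetCard.1 hS').2
      have hrec : nuR p S' * qR p S' = ∑ x ∈ S', pR p x * nuR p (S'.erase x) := by
        exact nuR_rec p hp (hfin _ (by omega))
          (fun x hx => hfin _ (by rw [Finset.card_erase_of_mem hx, hcard]; omega))
          (by intro h; rw [h] at hcard; simp at hcard)
      calc nuR p S' * qR p S' ^ 2 = (nuR p S' * qR p S') * qR p S' := by ring
      _ = (∑ x ∈ S', pR p x * nuR p (S'.erase x)) * qR p S' := by rw [hrec]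
      _ = ∑ x ∈ S', pR p x * nuR p (S'.erase x) * qR p S' := by rw [Finset.sum_mul]
      _ = _ := Finset.sum_congr rfl (fun x hx => by rw [Finset.insert_erase hx])
    rw [Finset.sum_congr rfl hstep,
      double_count j (fun S x => pR p x * nuR p S * qR p (insert x S))]
    -- pointwise bound on level j
    have hpoint : ∀ S ∈ Finset.powersetCard j (Finset.univ : Finset (Fin n)),
        (∑ x ∈ Sᶜ, pR p x * nuR p S * qR p (insert x S)) * ((n:ℝ) - j)
          ≤ nuR p S * qR p S ^ 2 * ((n:ℝ) - j - 1) := by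
      intro S hS
      have hcard := (Finset.mem_powersetCard.1 hS).2
      have hccard : (Sᶜ.card : ℝ) = (n : ℝ) - j := by
        have hjle : j ≤ n := by omega
        rw [Finset.card_compl, hcard, Fintype.card_fin, Nat.cast_sub hjle]
      have hq : ∀ x ∈ Sᶜ, qR p (insert x S) = qR p S - pR p x := by
        intro x hx
        have := qR_insert p hp (Finset.mem_compl.1 hx)
        linarith
      have hsum : ∑ x ∈ Sᶜ, pR p x * qR p (insert x S)
          = qR p S ^ 2 - ∑ x ∈ Sᶜ, pR p x ^ 2 := by
        rw [Finset.sum_congr rfl (fun x hx => by rw [hq x hx])]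
        have : ∀ x ∈ Sᶜ, pR p x * (qR p S - pR p x)
            = pR p x * qR p S - pR p x ^ 2 := fun x _ => by ring
        rw [Finset.sum_congr rfl this, Finset.sum_sub_distrib, ← Finset.sum_mul,
          sum_pR_compl p hp]
        ring
      have hCS : qR p S ^ 2 ≤ ((n:ℝ) - j) * ∑ x ∈ Sᶜ, pR p x ^ 2 := by
        have := sq_sum_le Sᶜ (pR p)
        rw [sum_pR_compl p hp, hccard] at this
        exact this
      have hfac : ∑ x ∈ Sᶜ, pR p x * nuR p S * qR p (insert x S)
          = nuR p S * ∑ x ∈ Sᶜ, pR p x * qR p (insert x S) := by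
        rw [Finset.mul_sum]
        exact Finset.sum_congr rfl (fun x _ => by ring)
      rw [hfac, hsum]
      have hnuS := nuR_nonneg p S
      nlinarith [mul_le_mul_of_nonneg_left hCS hnuS]
    -- sum the pointwise bound
    have hsumbound : (∑ S ∈ Finset.powersetCard j (Finset.univ : Finset (Fin n)),
          ∑ x ∈ Sᶜ, pR p x * nuR p S * qR p (insert x S)) * ((n:ℝ) - j)
        ≤ (∑ S ∈ Finset.powersetCard j (Finset.univ : Finset (Fin n)),
            nuR p S * qR p S ^ 2) * ((n:ℝ) - j - 1) := by
      rw [Finset.sum_mul, Finset.sum_mul]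
      exact Finset.sum_le_sum hpoint
    have hB : (0:ℝ) ≤ ∑ S ∈ Finset.powersetCard j (Finset.univ : Finset (Fin n)),
        ∑ x ∈ Sᶜ, pR p x * nuR p S * qR p (insert x S) := by
      apply Finset.sum_nonneg; intro S _
      apply Finset.sum_nonneg; intro x _
      have h1 := pR_nonneg p x
      have h2 := nuR_nonneg p S
      have h3 := qR_nonneg p (insert x S)
      positivity
    have hA : (0:ℝ) ≤ ∑ S ∈ Finset.powersetCard j (Finset.univ : Finset (Fin n)),
        nuR p S * qR p S ^ 2 := by
      apply Finset.sum_nonneg; intro S _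
      have h1 := nuR_nonneg p S
      have h2 := qR_nonneg p S
      positivity
    have hIH := ih (by omega)
    have hn0 : (0:ℝ) ≤ (n:ℝ) := by positivity
    have h2nj : (2:ℝ) ≤ (n:ℝ) - j := by
      have : (j + 2 : ℝ) ≤ (n:ℝ) := by exact_mod_cast hjn
      linarith
    push_cast
    nlinarith [mul_le_mul_of_nonneg_right hsumbound hn0,
      mul_le_mul_of_nonneg_right hIH (show (0:ℝ) ≤ (n:ℝ) - j - 1 by linarith)]

lemma Mlevel (p : Fin n → ℝ≥0∞) (hp : ∑ i, p i = 1) (k : ℕ)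
    (hfin : ∀ S : Finset (Fin n), S.card < k → nu p S ≠ ⊤) (hkn : k ≤ n) : ∀ j, j < k →
    (n : ℝ) ≤ (∑ S ∈ Finset.powersetCard j (Finset.univ : Finset (Fin n)), nuR p S)
      * ((n:ℝ) - j) := by
  intro j hjk
  have hR := Rlevel p hp k hfin j hjk
  have hQ := Qlevel p hp k hfin hkn j hjk
  have hCS := Finset.sum_mul_sq_le_sq_mul_sq
    (Finset.powersetCard j (Finset.univ : Finset (Fin n)))
    (fun S => Real.sqrt (nuR p S) * qR p S) (fun S => Real.sqrt (nuR p S))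
  have e1 : ∀ S : Finset (Fin n), Real.sqrt (nuR p S) * qR p S * Real.sqrt (nuR p S)
      = nuR p S * qR p S := by
    intro S
    have h := Real.mul_self_sqrt (nuR_nonneg p S)
    linear_combination (qR p S) * h
  have e2 : ∀ S : Finset (Fin n), (Real.sqrt (nuR p S) * qR p S) ^ 2
      = nuR p S * qR p S ^ 2 := by
    intro S
    have h := Real.mul_self_sqrt (nuR_nonneg p S)
    nlinarith [h]
  have e3 : ∀ S : Finset (Fin n), (Real.sqrt (nuR p S)) ^ 2 = nuR p S := fun S =>
    Real.sq_sqrt (nuR_nonneg p S)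
  rw [Finset.sum_congr rfl (fun S _ => e1 S), Finset.sum_congr rfl (fun S _ => e2 S),
    Finset.sum_congr rfl (fun S _ => e3 S), hR] at hCS
  have hM : (0:ℝ) ≤ ∑ S ∈ Finset.powersetCard j (Finset.univ : Finset (Fin n)), nuR p S :=
    Finset.sum_nonneg (fun S _ => nuR_nonneg p S)
  have hn0 : (0:ℝ) ≤ (n:ℝ) := by positivity
  nlinarith [mul_le_mul_of_nonneg_right hQ hM, mul_le_mul_of_nonneg_left hCS hn0]

end Levels


/-! ### Assembly pieces -/

lemma cast_div_eq {i : ℕ} (hin : i < n) :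
    (n:ℝ≥0∞) / ((n:ℝ≥0∞) - (i:ℝ≥0∞)) = ENNReal.ofReal ((n:ℝ) / ((n:ℝ) - i)) := by
  have h1 : ((n:ℝ) - i) = ((n - i : ℕ) : ℝ) := by rw [Nat.cast_sub hin.le]
  have h2 : ((n:ℝ≥0∞) - (i:ℝ≥0∞)) = ((n - i : ℕ) : ℝ≥0∞) := (ENNReal.natCast_sub n i).symm
  have h3 : (0:ℝ) < ((n - i : ℕ) : ℝ) := by
    have : 0 < n - i := by omega
    exact_mod_cast this
  rw [h1, h2, ENNReal.ofReal_div_of_pos h3, ENNReal.ofReal_natCast, ENNReal.ofReal_natCast]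

lemma level_nu_ofReal (p : Fin n → ℝ≥0∞) {k : ℕ}
    (hfin : ∀ S : Finset (Fin n), S.card < k → nu p S ≠ ⊤) {j : ℕ} (hjk : j < k) :
    ∑ S ∈ Finset.powersetCard j (Finset.univ : Finset (Fin n)), nu p S
      = ENNReal.ofReal (∑ S ∈ Finset.powersetCard j (Finset.univ : Finset (Fin n)), nuR p S) := by
  rw [ENNReal.ofReal_sum_of_nonneg (fun S _ => nuR_nonneg p S)]
  refine Finset.sum_congr rfl (fun S hS => ?_)
  have hcard := (Finset.mem_powersetCard.1 hS).2
  rw [nuR, ENNReal.ofReal_toReal (hfin S (by omega))]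

lemma lower_main (p : Fin n → ℝ≥0∞) (hp : ∑ i, p i = 1) (k : ℕ) (hkn : k ≤ n)
    (hfin : ∀ S : Finset (Fin n), S.card < k → nu p S ≠ ⊤) :
    ∑ i ∈ Finset.range k, (n : ℝ≥0∞) / ((n : ℝ≥0∞) - (i : ℝ≥0∞))
      ≤ ∑ j ∈ Finset.range k, ∑ S ∈ Finset.powersetCard j (Finset.univ : Finset (Fin n)),
          nu p S := by
  refine Finset.sum_le_sum (fun j hj => ?_)
  have hjk := Finset.mem_range.1 hj
  have hjn : j < n := by omega
  rw [cast_div_eq hjn, level_nu_ofReal p hfin hjk]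
  apply ENNReal.ofReal_le_ofReal
  have hM := Mlevel p hp k hfin hkn j hjk
  have hpos : (0:ℝ) < (n:ℝ) - j := by
    have : (j:ℝ) < (n:ℝ) := by exact_mod_cast hjn
    linarith
  rw [div_le_iff₀ hpos]
  linarith

lemma supp_fin (p : Fin n → ℝ≥0∞) (hp : ∑ i, p i = 1) (k : ℕ)
    (hsupp : k ≤ (Finset.univ.filter (fun x => p x ≠ 0)).card) :
    ∀ S : Finset (Fin n), S.card < k → nu p S ≠ ⊤ := by
  intro S hS
  apply nu_ne_top
  have hns : ¬ (Finset.univ.filter (fun x => p x ≠ 0)) ⊆ S := by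
    intro h
    have := Finset.card_le_card h
    omega
  obtain ⟨c, hc, hcS⟩ := Finset.not_subset.1 hns
  have hc0 : p c ≠ 0 := (Finset.mem_filter.1 hc).2
  have hq0 : qS p S ≠ 0 := by
    intro h
    apply hc0
    have := Finset.single_le_sum (f := p) (fun x _ => zero_le) (Finset.mem_compl.2 hcS)
    rw [← qS] at this
    exact le_antisymm (h ▸ this) zero_le
  calc pS p S < pS p S + qS p S := ENNReal.lt_add_right (pS_ne_top p hp S) hq0
  _ = 1 := pS_add_qS p hp S


/-! ### Uniform distribution -/

lemma unif_sum (hn : 0 < n) : ∑ _i : Fin n, ((n:ℝ≥0∞))⁻¹ = 1 := by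
  rw [Finset.sum_const, Finset.card_univ, Fintype.card_fin, nsmul_eq_mul,
    ENNReal.mul_inv_cancel (by exact_mod_cast hn.ne') (ENNReal.natCast_ne_top n)]

lemma pS_unif (hn : 0 < n) (S : Finset (Fin n)) :
    pS (fun _ => ((n:ℝ≥0∞))⁻¹) S = (S.card : ℝ≥0∞) * ((n:ℝ≥0∞))⁻¹ := by
  rw [pS, Finset.sum_const, nsmul_eq_mul]

lemma qS_unif (hn : 0 < n) (S : Finset (Fin n)) :
    qS (fun _ => ((n:ℝ≥0∞))⁻¹) S = ((n - S.card : ℕ) : ℝ≥0∞) * ((n:ℝ≥0∞))⁻¹ := by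
  rw [qS, Finset.sum_const, nsmul_eq_mul, Finset.card_compl, Fintype.card_fin]

lemma hfin_unif {k : ℕ} (hk : 1 ≤ k) (hkn : k ≤ n) :
    ∀ S : Finset (Fin n), S.card < k → nu (fun _ => ((n:ℝ≥0∞))⁻¹) S ≠ ⊤ := by
  intro S hS
  have hn : 0 < n := by omega
  apply nu_ne_top
  rw [pS_unif hn, ← div_eq_mul_inv]
  rw [ENNReal.div_lt_iff (Or.inl (by exact_mod_cast hn.ne')) (Or.inl (ENNReal.natCast_ne_top n)),
    one_mul]
  exact_mod_cast (by omega : S.card < n)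

lemma unif_level {k : ℕ} (hk : 1 ≤ k) (hkn : k ≤ n) {j : ℕ} (hjk : j < k) :
    ∑ S ∈ Finset.powersetCard j (Finset.univ : Finset (Fin n)), nu (fun _ => ((n:ℝ≥0∞))⁻¹) S
      = (n:ℝ≥0∞) / ((n:ℝ≥0∞) - (j:ℝ≥0∞)) := by
  have hn : 0 < n := by omega
  have hjn : j < n := by omega
  set u : Fin n → ℝ≥0∞ := fun _ => ((n:ℝ≥0∞))⁻¹ with hu
  have hpu : ∑ i, u i = 1 := unif_sum hn
  have hfin := hfin_unif (n := n) hk hkn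
  have hR := Rlevel u hpu k hfin j hjk
  have hn0 : (n:ℝ) ≠ 0 := by positivity
  have hnjpos : (0:ℝ) < (n:ℝ) - j := by
    have : (j:ℝ) < (n:ℝ) := by exact_mod_cast hjn
    linarith
  have hqconst : ∀ S ∈ Finset.powersetCard j (Finset.univ : Finset (Fin n)),
      nuR u S * qR u S = nuR u S * (((n:ℝ) - j) / n) := by
    intro S hS
    have hcard := (Finset.mem_powersetCard.1 hS).2
    have : qR u S = ((n:ℝ) - j) / n := by
      rw [qR, qS_unif hn, hcard, ENNReal.toReal_mul, ENNReal.toReal_inv,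
        ENNReal.toReal_natCast, ENNReal.toReal_natCast, Nat.cast_sub hjn.le, div_eq_mul_inv]
    rw [this]
  rw [Finset.sum_congr rfl hqconst, ← Finset.sum_mul] at hR
  have hM : (∑ S ∈ Finset.powersetCard j (Finset.univ : Finset (Fin n)), nuR u S)
      = (n:ℝ) / ((n:ℝ) - j) := by
    rw [eq_div_iff hnjpos.ne']
    field_simp at hR
    linarith
  rw [level_nu_ofReal u hfin hjk, hM, cast_div_eq hjn]


/-! ### Degenerate case -/

lemma firstTime_eq_top {k : ℕ} (ω : ℕ → Fin n) (h : ∀ r, ¬ condD k r ω) :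
    firstTime (fun r ω => condD (n := n) k r ω) ω = ⊤ := by
  rw [firstTime]
  refine (congrArg sInf (?_ : _ = (∅ : Set ℝ≥0∞))).trans sInf_empty
  rw [Set.eq_empty_iff_forall_notMem]
  rintro x ⟨r, rfl, _, hr⟩
  exact h r hr

lemma degenerate (p : Fin n → ℝ≥0∞) (μ : Measure (ℕ → Fin n))
    (hμ : ∀ (m : ℕ) (a : Fin m → Fin n),
      μ {ω : ℕ → Fin n | ∀ i : Fin m, ω (i : ℕ) = a i} = ∏ i : Fin m, p (a i))
    (k : ℕ) (hk : 1 ≤ k)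
    (hsupp : (Finset.univ.filter (fun x => p x ≠ 0)).card < k) :
    ∫⁻ ω, firstTime (fun r ω => condD (n := n) k r ω) ω ∂μ = ⊤ := by
  set Supp := Finset.univ.filter (fun x : Fin n => p x ≠ 0) with hSupp
  have hnull : μ {ω : ℕ → Fin n | ¬ ∀ i : ℕ, ω i ∈ Supp} = 0 := by
    have hsub : {ω : ℕ → Fin n | ¬ ∀ i : ℕ, ω i ∈ Supp}
        ⊆ ⋃ i : ℕ, {ω : ℕ → Fin n | ω i ∉ Supp} := by
      intro ω hω
      rw [Set.mem_setOf_eq] at hω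
      push_neg at hω
      obtain ⟨i, hi⟩ := hω
      exact Set.mem_iUnion.2 ⟨i, hi⟩
    refine measure_mono_null hsub (measure_iUnion_null (fun i => ?_))
    have hev : {ω : ℕ → Fin n | ω i ∉ Supp}
        = {ω : ℕ → Fin n | (fun a : Fin (i+1) → Fin n => a ⟨i, Nat.lt_succ_self i⟩ ∉ Supp)
            (fun t : Fin (i+1) => ω (t : ℕ))} := rfl
    rw [hev]
    refine (meas_event p μ hμ (i+1)
      (fun a : Fin (i+1) → Fin n => a ⟨i, Nat.lt_succ_self i⟩ ∉ Supp)).trans ?_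
    apply Finset.sum_eq_zero
    intro a ha
    have h0 : p (a ⟨i, Nat.lt_succ_self i⟩) = 0 := by
      have hmem := (Finset.mem_filter.1 ha).2
      by_contra hne
      exact hmem (Finset.mem_filter.2 ⟨Finset.mem_univ _, hne⟩)
    exact Finset.prod_eq_zero (Finset.mem_univ _) h0
  have hae : (fun ω => firstTime (fun r ω => condD (n := n) k r ω) ω)
      =ᵐ[μ] (fun _ => (⊤:ℝ≥0∞)) := by
    rw [Filter.eventuallyEq_iff_exists_mem]
    refine ⟨{ω : ℕ → Fin n | ∀ i : ℕ, ω i ∈ Supp}, ?_, ?_⟩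
    · rw [MeasureTheory.mem_ae_iff]
      exact hnull
    · intro ω hω
      refine firstTime_eq_top ω (fun r hr => ?_)
      have himg : (Finset.univ : Finset (Fin r)).image (fun j : Fin r => ω (j : ℕ)) ⊆ Supp := by
        intro c hc
        rcases Finset.mem_image.1 hc with ⟨jj, _, rfl⟩
        exact hω (jj : ℕ)
      have := Finset.card_le_card himg
      unfold condD at hr
      omega
  rw [lintegral_congr_ae hae, lintegral_const]
  have huniv : μ Set.univ = 1 := by
    have h0 := hμ 0 (fun i : Fin 0 => i.elim0)
    rw [show {ω : ℕ → Fin n | ∀ i : Fin 0, ω (i : ℕ) = i.elim0} = Set.univ from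
      Set.eq_univ_of_forall (fun ω i => i.elim0)] at h0
    simpa using h0
  rw [huniv, mul_one]

/-! ### Harmonic number arithmetic -/

lemma harmonic_part (k : ℕ) (hk : 1 ≤ k) (hkn : k ≤ n) :
    ∑ i ∈ Finset.range k, (n:ℝ≥0∞) / ((n:ℝ≥0∞) - (i:ℝ≥0∞))
      = ENNReal.ofReal ((n:ℝ) * (harmonicNumber n - harmonicNumber (n - k))) := by
  have h1 : ∀ i ∈ Finset.range k, (n:ℝ≥0∞) / ((n:ℝ≥0∞) - (i:ℝ≥0∞))
      = ENNReal.ofReal ((n:ℝ) / ((n:ℝ) - i)) := by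
    intro i hi
    exact cast_div_eq (by have := Finset.mem_range.1 hi; omega)
  have h2 : ∀ i ∈ Finset.range k, (0:ℝ) ≤ (n:ℝ) / ((n:ℝ) - i) := by
    intro i hi
    have hin : i < n := by have := Finset.mem_range.1 hi; omega
    have : (i:ℝ) < (n:ℝ) := by exact_mod_cast hin
    have hpos : (0:ℝ) < (n:ℝ) - i := by linarith
    positivity
  rw [Finset.sum_congr rfl h1, ← ENNReal.ofReal_sum_of_nonneg h2]
  congr 1
  rw [harmonicNumber, harmonicNumber, ← Finset.sum_Ico_eq_sub _ (Nat.sub_le n k),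
    Finset.mul_sum]
  refine Finset.sum_nbij' (fun i => n - 1 - i) (fun j => n - 1 - j) ?_ ?_ ?_ ?_ ?_
  · intro i hi
    have := Finset.mem_range.1 hi
    show n - 1 - i ∈ Finset.Ico (n - k) n
    rw [Finset.mem_Ico]
    omega
  · intro j hj
    have := Finset.mem_Ico.1 hj
    show n - 1 - j ∈ Finset.range k
    rw [Finset.mem_range]
    omega
  · intro i hi
    have := Finset.mem_range.1 hi
    show n - 1 - (n - 1 - i) = i
    omega
  · intro j hj
    have := Finset.mem_Ico.1 hj
    show n - 1 - (n - 1 - j) = j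
    omega
  · intro i hi
    have hik := Finset.mem_range.1 hi
    have h1n : 1 ≤ n := by omega
    have hin : i ≤ n - 1 := by omega
    show (n:ℝ) / ((n:ℝ) - i) = (n:ℝ) * (1 / (((n - 1 - i : ℕ) : ℝ) + 1))
    have hcast : ((n - 1 - i : ℕ) : ℝ) + 1 = (n:ℝ) - i := by
      rw [Nat.cast_sub hin, Nat.cast_sub (by omega : 1 ≤ n)]
      push_cast
      ring
    rw [hcast, div_eq_mul_one_div]

end CCAux

/-- Let `n ≥ k ≥ 1`, and for a probability mass function `p` on `[n]` let `T_k^p` be the least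
`r ≥ 1` such that at least `k` distinct values appear among the first `r` coordinates of the
coordinate process on `[n]^ℕ` under the infinite product measure `μp` of `p` (characterized by
its values on cylinder sets).  Then `E[T_k^p] ≥ Σ_{i=0}^{k-1} n/(n−i)`, with equality for the
uniform distribution `u` (product measure `μu`): `E[T_k^u] = Σ_{i=0}^{k-1} n/(n−i)
= n(H_n − H_{n−k})`. -/
theorem expected_coverage_depth_lower_bound (n k : ℕ) (hk : 1 ≤ k) (hkn : k ≤ n)
    (p : Fin n → ℝ≥0∞) (hp : ∑ i, p i = 1) (μp μu : Measure (ℕ → Fin n))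
    (hμp : ∀ (m : ℕ) (a : Fin m → Fin n),
      μp {ω : ℕ → Fin n | ∀ i : Fin m, ω (i : ℕ) = a i} = ∏ i : Fin m, p (a i))
    (hμu : ∀ (m : ℕ) (a : Fin m → Fin n),
      μu {ω : ℕ → Fin n | ∀ i : Fin m, ω (i : ℕ) = a i} = ∏ _i : Fin m, ((n : ℝ≥0∞))⁻¹) :
    (∑ i ∈ Finset.range k, (n : ℝ≥0∞) / ((n : ℝ≥0∞) - (i : ℝ≥0∞)) ≤
      ∫⁻ ω, firstTime
        (fun r ω => k ≤ ((Finset.univ : Finset (Fin r)).image (fun j => ω (j : ℕ))).card) ω ∂μp) ∧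
    (∫⁻ ω, firstTime
        (fun r ω => k ≤ ((Finset.univ : Finset (Fin r)).image (fun j => ω (j : ℕ))).card) ω ∂μu =
      ∑ i ∈ Finset.range k, (n : ℝ≥0∞) / ((n : ℝ≥0∞) - (i : ℝ≥0∞))) ∧
    (∑ i ∈ Finset.range k, (n : ℝ≥0∞) / ((n : ℝ≥0∞) - (i : ℝ≥0∞)) =
      ENNReal.ofReal ((n : ℝ) * (harmonicNumber n - harmonicNumber (n - k)))) := by
  have hn : 0 < n := by omega
  refine ⟨?_, ?_, CCAux.harmonic_part k hk hkn⟩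
  · by_cases hsupp : (Finset.univ.filter (fun x => p x ≠ 0)).card < k
    · have htop : ∫⁻ ω, firstTime
          (fun r ω => k ≤ ((Finset.univ : Finset (Fin r)).image (fun j => ω (j : ℕ))).card) ω ∂μp
          = ⊤ := CCAux.degenerate p μp hμp k hk hsupp
      rw [htop]
      exact le_top
    · push_neg at hsupp
      have hfin := CCAux.supp_fin p hp k hsupp
      have hE : ∫⁻ ω, firstTime
          (fun r ω => k ≤ ((Finset.univ : Finset (Fin r)).image (fun j => ω (j : ℕ))).card) ω ∂μp
          = ∑ j ∈ Finset.range k,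
              ∑ S ∈ Finset.powersetCard j (Finset.univ : Finset (Fin n)), CCAux.nu p S :=
        CCAux.lintegral_eq_sum_nu p μp hμp k hk
      rw [hE]
      exact CCAux.lower_main p hp k hkn hfin
  · have hμu' : ∀ (m : ℕ) (a : Fin m → Fin n),
        μu {ω : ℕ → Fin n | ∀ i : Fin m, ω (i : ℕ) = a i}
          = ∏ i : Fin m, (fun _ : Fin n => ((n : ℝ≥0∞))⁻¹) (a i) := fun m a => hμu m a
    have hE : ∫⁻ ω, firstTime
        (fun r ω => k ≤ ((Finset.univ : Finset (Fin r)).image (fun j => ω (j : ℕ))).card) ω ∂μu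
        = ∑ j ∈ Finset.range k,
            ∑ S ∈ Finset.powersetCard j (Finset.univ : Finset (Fin n)),
              CCAux.nu (fun _ : Fin n => ((n : ℝ≥0∞))⁻¹) S :=
      CCAux.lintegral_eq_sum_nu (fun _ : Fin n => ((n : ℝ≥0∞))⁻¹) μu hμu' k hk
    rw [hE]
    exact Finset.sum_congr rfl
      (fun j hj => CCAux.unif_level hk hkn (Finset.mem_range.1 hj))
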